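/- The function φ(x) = 1/(e^{1/x} − 1) is convex on the interval (0, ∞). -/

import Mathlib

open Real Set

-- key inequality: for u ≥ 0, 2(e^u - 1) ≤ u(e^u + 1)
lemma key_deriv (x : ℝ) :
    HasDerivAt (fun u : ℝ => u * (Real.exp u + 1) - 2 * (Real.exp u - 1))
      (x * Real.exp x - Real.exp x + 1) x := by
  have h1 : HasDerivAt (fun u : ℝ => u * (Real.exp u + 1))
      (1 * (Real.exp x + 1) + x * Real.exp x) x :=
    (hasDerivAt_id x).mul ((Real.hasDerivAt_exp x).add_const 1)
  have h2 : HasDerivAt (fun u : ℝ => 2 * (Real.exp u - 1)) (2 * Real.exp x) x := by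
    simpa using (((Real.hasDerivAt_exp x).sub_const 1).const_mul 2)
  have := h1.sub h2
  rw [Pi.sub_def] at this
  exact this.congr_deriv (by ring)

lemma key (u : ℝ) (hu : 0 ≤ u) : 2 * (Real.exp u - 1) ≤ u * (Real.exp u + 1) := by
  set h : ℝ → ℝ := fun u => u * (Real.exp u + 1) - 2 * (Real.exp u - 1) with hh
  have hmono : MonotoneOn h (Set.Ici (0 : ℝ)) := by
    apply monotoneOn_of_deriv_nonneg (convex_Ici 0)
    · exact (Continuous.continuousOn (by continuity))
    · intro x hx
      exact (key_deriv x).differentiableAt.differentiableWithinAt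
    · intro x hx
      rw [(key_deriv x).deriv]
      rw [interior_Ici] at hx
      have hx' : (0:ℝ) < x := hx
      have e1 : Real.exp x * Real.exp (-x) = 1 := by
        rw [← Real.exp_add]; simp
      nlinarith [mul_le_mul_of_nonneg_left (Real.add_one_le_exp (-x))
        (le_of_lt (Real.exp_pos x)), e1]
  have h0 : h 0 = 0 := by simp [hh]
  have := hmono (Set.self_mem_Ici) hu hu
  rw [h0] at this
  simpa [hh] using this

theorem convexOn_one_div_exp_one_div_sub_one :
    ConvexOn ℝ (Set.Ioi (0 : ℝ)) (fun x => 1 / (Real.exp (1 / x) - 1)) := by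
  set f : ℝ → ℝ := fun x => 1 / (Real.exp (1 / x) - 1) with hf_def
  set F : ℝ → ℝ := fun x => Real.exp (1 / x) / (x ^ 2 * (Real.exp (1 / x) - 1) ^ 2) with hF_def
  -- basic facts at points x > 0
  have hne : ∀ x : ℝ, 0 < x → Real.exp (1 / x) - 1 ≠ 0 := by
    intro x hx
    have : (1:ℝ) < Real.exp (1 / x) := by
      have : Real.exp 0 < Real.exp (1 / x) := Real.exp_lt_exp.mpr (by positivity)
      simpa using this
    linarith
  have hone : ∀ x : ℝ, 0 < x → (1:ℝ) < Real.exp (1 / x) := by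
    intro x hx
    have : Real.exp 0 < Real.exp (1 / x) := Real.exp_lt_exp.mpr (by positivity)
    simpa using this
  have hinner : ∀ x : ℝ, 0 < x →
      HasDerivAt (fun y : ℝ => Real.exp (1 / y)) (Real.exp (1 / x) * (-(x ^ 2)⁻¹)) x := by
    intro x hx
    have hu : HasDerivAt (fun y : ℝ => 1 / y) (-(x ^ 2)⁻¹) x := by
      simpa [one_div] using hasDerivAt_inv (ne_of_gt hx)
    exact hu.exp
  have hd1 : ∀ x : ℝ, 0 < x → HasDerivAt f (F x) x := by
    intro x hx
    have he : HasDerivAt (fun y : ℝ => Real.exp (1 / y) - 1)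
        (Real.exp (1 / x) * (-(x ^ 2)⁻¹)) x := (hinner x hx).sub_const 1
    have := he.inv (hne x hx)
    have h2 : HasDerivAt f
        (-(Real.exp (1 / x) * (-(x ^ 2)⁻¹)) / (Real.exp (1 / x) - 1) ^ 2) x := by
      simpa [hf_def, one_div, Pi.inv_def] using this
    convert h2 using 1
    have hx2 : (x:ℝ) ^ 2 ≠ 0 := by positivity
    simp only [hF_def]
    field_simp
  -- second derivative
  have hd2 : ∀ x : ℝ, 0 < x → HasDerivAt F
      ((Real.exp (1 / x) * (-(x ^ 2)⁻¹) * (x ^ 2 * (Real.exp (1 / x) - 1) ^ 2)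
        - Real.exp (1 / x) * (2 * x ^ 1 * (Real.exp (1 / x) - 1) ^ 2
          + x ^ 2 * (2 * (Real.exp (1 / x) - 1) ^ 1 * (Real.exp (1 / x) * (-(x ^ 2)⁻¹)))))
        / (x ^ 2 * (Real.exp (1 / x) - 1) ^ 2) ^ 2) x := by
    intro x hx
    have hN := hinner x hx
    have he : HasDerivAt (fun y : ℝ => Real.exp (1 / y) - 1)
        (Real.exp (1 / x) * (-(x ^ 2)⁻¹)) x := (hinner x hx).sub_const 1
    have hD : HasDerivAt (fun y : ℝ => y ^ 2 * (Real.exp (1 / y) - 1) ^ 2)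
        (2 * x ^ 1 * (Real.exp (1 / x) - 1) ^ 2
          + x ^ 2 * (2 * (Real.exp (1 / x) - 1) ^ 1 * (Real.exp (1 / x) * (-(x ^ 2)⁻¹)))) x := by
      have h1 : HasDerivAt (fun y : ℝ => y ^ 2) (2 * x ^ 1) x := by
        simpa using hasDerivAt_pow 2 x
      have h2 := he.pow 2
      simpa [mul_comm, mul_assoc, mul_left_comm, Pi.mul_def, Pi.pow_def] using h1.mul h2
    have hD0 : x ^ 2 * (Real.exp (1 / x) - 1) ^ 2 ≠ 0 := by
      have := hne x hx
      positivity
    exact hN.div hD hD0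
  -- nonnegativity of the second derivative
  have hG : ∀ x : ℝ, 0 < x →
      0 ≤ (Real.exp (1 / x) * (-(x ^ 2)⁻¹) * (x ^ 2 * (Real.exp (1 / x) - 1) ^ 2)
        - Real.exp (1 / x) * (2 * x ^ 1 * (Real.exp (1 / x) - 1) ^ 2
          + x ^ 2 * (2 * (Real.exp (1 / x) - 1) ^ 1 * (Real.exp (1 / x) * (-(x ^ 2)⁻¹)))))
        / (x ^ 2 * (Real.exp (1 / x) - 1) ^ 2) ^ 2 := by
    intro x hx
    apply div_nonneg _ (by positivity)
    have hx2 : ((x:ℝ) ^ 2)⁻¹ * x ^ 2 = 1 := by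
      field_simp
    set e := Real.exp (1 / x) with he_def
    have he1 : 1 < e := hone x hx
    have hk : 2 * (e - 1) ≤ (1 / x) * (e + 1) := key (1 / x) (by positivity)
    have hk' : 2 * x * (e - 1) ≤ e + 1 := by
      have hxne : x ≠ 0 := ne_of_gt hx
      calc 2 * x * (e - 1) = x * (2 * (e - 1)) := by ring
        _ ≤ x * ((1 / x) * (e + 1)) := by
            apply mul_le_mul_of_nonneg_left hk (le_of_lt hx)
        _ = e + 1 := by field_simp
    have hnum : Real.exp (1 / x) * (-(x ^ 2)⁻¹) * (x ^ 2 * (Real.exp (1 / x) - 1) ^ 2)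
        - Real.exp (1 / x) * (2 * x ^ 1 * (Real.exp (1 / x) - 1) ^ 2
          + x ^ 2 * (2 * (Real.exp (1 / x) - 1) ^ 1 * (Real.exp (1 / x) * (-(x ^ 2)⁻¹))))
        = e * (e - 1) * ((e + 1) - 2 * x * (e - 1)) := by
      rw [← he_def]
      have hxne : (x:ℝ) ^ 2 ≠ 0 := by positivity
      field_simp
      ring
    rw [hnum]
    have h1 : 0 < e * (e - 1) := by nlinarith
    nlinarith
  -- assemble
  apply convexOn_of_deriv2_nonneg (convex_Ioi 0)
  · intro x hx
    exact (hd1 x hx).differentiableAt.continuousAt.continuousWithinAt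
  · rw [interior_Ioi]
    intro x hx
    exact (hd1 x hx).differentiableAt.differentiableWithinAt
  · rw [interior_Ioi]
    intro x hx
    have heq : deriv f =ᶠ[nhds x] F := by
      filter_upwards [IsOpen.mem_nhds isOpen_Ioi hx] with y hy
      exact (hd1 y hy).deriv
    exact ((hd2 x hx).congr_of_eventuallyEq heq).differentiableAt.differentiableWithinAt
  · rw [interior_Ioi]
    intro x hx
    have heq : deriv f =ᶠ[nhds x] F := by
      filter_upwards [IsOpen.mem_nhds isOpen_Ioi hx] with y hy
      exact (hd1 y hy).deriv
    have h2 := ((hd2 x hx).congr_of_eventuallyEq heq).deriv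
    show 0 ≤ deriv (deriv f) x
    rw [h2]
    exact hG x hx
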